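/- Let ρ > 0, ε > 0, V > 0, and p, c, V' ∈ ℝ. For each β > 0 let s*(β) be the unique s ∈ (0, ρ) with (ρ − s)(ε + sV) = β s V. Define Gτ(β) := (ρ − s*(β)) + (p − c)·β·s*(β)·V'·ε/((ε + s*(β)·V)² + β·V·ε), BτLR(β) := β·(p − c)·(−s*(β)²·V·V'·(ε + s*(β)·V)) / (((ε + s*(β)·V) + β·V)·((s*(β)·V + ε)² + β·V·ε)), and BτCR(β) := −(p − c)·β²·ε²·V·V'·s*(β) / ((V·s*(β) + ε)²·((s*(β)·V + ε)² + β·V·ε)). Then as β → ∞: Gτ(β) → ρ, BτLR(β) → 0, and BτCR(β) → −ρ·(p − c)·V'/V; that is, in the supply-constrained limit the listing-side experiment is unbiased while the customer-side experiment has nonvanishing bias. -/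

import Mathlib

open Filter Topology

/-- in the supply-constrained limit β → ∞, the normalized
profit treatment effect tends to ρ, the listing-side bias vanishes, and the
customer-side bias tends to −ρ(p − c)V'/V. -/
theorem limits_beta_infty
    (ρ ε V : ℝ) (p c V' : ℝ) (hρ : 0 < ρ) (hε : 0 < ε) (hV : 0 < V)
    (s : ℝ → ℝ)
    (hs : ∀ β : ℝ, 0 < β →
      s β ∈ Set.Ioo 0 ρ ∧ (ρ - s β) * (ε + s β * V) = β * s β * V) :
    Tendsto
        (fun β =>
          (ρ - s β) + (p - c) * β * s β * V' * ε / ((ε + s β * V) ^ 2 + β * V * ε))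
        atTop (𝓝 ρ) ∧
      Tendsto
        (fun β =>
          β * ((p - c) * (-(s β ^ 2) * V * V' * (ε + s β * V))) /
            (((ε + s β * V) + β * V) * ((s β * V + ε) ^ 2 + β * V * ε)))
        atTop (𝓝 0) ∧
      Tendsto
        (fun β =>
          -((p - c) * β ^ 2 * ε ^ 2 * V * V' * s β) /
            ((V * s β + ε) ^ 2 * ((s β * V + ε) ^ 2 + β * V * ε)))
        atTop (𝓝 (-(ρ * (p - c) * V') / V)) := by
  have hpos := eventually_gt_atTop (0 : ℝ)
  -- s β → 0
  have hbd : ∀ᶠ β in atTop, 0 ≤ s β ∧ s β ≤ ρ * (ε + ρ * V) / V / β := by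
    filter_upwards [hpos] with β hβ
    obtain ⟨⟨h0, hρs⟩, heq⟩ := hs β hβ
    refine ⟨h0.le, ?_⟩
    rw [div_div, le_div_iff₀ (by positivity)]
    nlinarith [heq, mul_nonneg (mul_nonneg hρ.le hV.le) (sub_nonneg.mpr hρs.le),
      mul_nonneg h0.le (by nlinarith [mul_nonneg h0.le hV.le] : (0:ℝ) ≤ ε + s β * V)]
  have hs0 : Tendsto s atTop (𝓝 0) := by
    refine tendsto_of_tendsto_of_tendsto_of_le_of_le' tendsto_const_nhds
      (tendsto_const_nhds.div_atTop tendsto_id)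
      (hbd.mono fun β h => h.1) (hbd.mono fun β h => h.2)
  -- β * s β → ρ ε / V
  have hbs : Tendsto (fun β => β * s β) atTop (𝓝 (ρ * ε / V)) := by
    have h1 : Tendsto (fun β => (ρ - s β) * (ε + s β * V) / V) atTop
        (𝓝 ((ρ - 0) * (ε + 0 * V) / V)) := by
      exact (((tendsto_const_nhds.sub hs0).mul
        (tendsto_const_nhds.add (hs0.mul_const V))).div_const V)
    have h1' : Tendsto (fun β => (ρ - s β) * (ε + s β * V) / V) atTop (𝓝 (ρ * ε / V)) := by
      simpa using h1
    refine h1'.congr' ?_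
    filter_upwards [hpos] with β hβ
    obtain ⟨⟨h0, hρs⟩, heq⟩ := hs β hβ
    field_simp
    linarith [heq]
  -- First limit
  have hden1 : Tendsto (fun β => (ε + s β * V) ^ 2 + β * V * ε) atTop atTop := by
    refine tendsto_atTop_mono (fun β => ?_) (tendsto_id.atTop_mul_const (by positivity :
      (0:ℝ) < V * ε))
    have : (0:ℝ) ≤ (ε + s β * V) ^ 2 := sq_nonneg _
    simp only [id]
    nlinarith
  have hnum1 : Tendsto (fun β => (p - c) * β * s β * V' * ε) atTop
      (𝓝 ((p - c) * (ρ * ε / V) * V' * ε)) := by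
    have := ((hbs.const_mul (p - c)).mul_const V').mul_const ε
    exact this.congr fun β => by ring
  have hG : Tendsto
      (fun β => (ρ - s β) + (p - c) * β * s β * V' * ε / ((ε + s β * V) ^ 2 + β * V * ε))
      atTop (𝓝 ρ) := by
    have h := ((tendsto_const_nhds (x := ρ)).sub hs0).add (hnum1.div_atTop hden1)
    simpa using h
  refine ⟨hG, ?_, ?_⟩
  · -- LR bias → 0
    have hnum : Tendsto (fun β => β * ((p - c) * (-(s β ^ 2) * V * V' * (ε + s β * V))))
        atTop (𝓝 ((p - c) * (-((ρ * ε / V) * 0) * V * V' * (ε + 0 * V)))) := by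
      have h2 : Tendsto (fun β => (p - c) * (-((β * s β) * s β) * V * V' * (ε + s β * V)))
          atTop (𝓝 ((p - c) * (-((ρ * ε / V) * 0) * V * V' * (ε + 0 * V)))) := by
        exact (((((hbs.mul hs0).neg.mul_const V).mul_const V').mul
          (tendsto_const_nhds.add (hs0.mul_const V))).const_mul (p - c))
      exact h2.congr fun β => by ring
    have hnum0 : Tendsto (fun β => β * ((p - c) * (-(s β ^ 2) * V * V' * (ε + s β * V))))
        atTop (𝓝 0) := by simpa using hnum
    have hden : Tendsto (fun β => ((ε + s β * V) + β * V) * ((s β * V + ε) ^ 2 + β * V * ε))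
        atTop atTop := by
      have hA : Tendsto (fun β => (ε + s β * V) + β * V) atTop atTop := by
        refine tendsto_atTop_mono' _ ?_ (tendsto_id.atTop_mul_const hV)
        filter_upwards [hpos] with β hβ
        have h0 := (hs β hβ).1.1
        simp only [id]
        nlinarith
      have hB : Tendsto (fun β => (s β * V + ε) ^ 2 + β * V * ε) atTop atTop := by
        refine tendsto_atTop_mono (fun β => ?_) (tendsto_id.atTop_mul_const (by positivity :
          (0:ℝ) < V * ε))
        have : (0:ℝ) ≤ (s β * V + ε) ^ 2 := sq_nonneg _
        simp only [id]
        nlinarith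
      exact hA.atTop_mul_atTop₀ hB
    exact hnum0.div_atTop hden
  · -- CR bias
    have hsmall : Tendsto (fun β => (s β * V + ε) ^ 2 / β) atTop (𝓝 0) := by
      have h1 : Tendsto (fun β => (s β * V + ε) ^ 2) atTop (𝓝 ((0 * V + ε) ^ 2)) :=
        ((hs0.mul_const V).add_const ε).pow 2
      exact h1.div_atTop tendsto_id
    have hden : Tendsto (fun β => (V * s β + ε) ^ 2 * ((s β * V + ε) ^ 2 / β + V * ε))
        atTop (𝓝 ((V * 0 + ε) ^ 2 * (0 + V * ε))) :=
      (((hs0.const_mul V).add_const ε).pow 2).mul (hsmall.add_const (V * ε))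
    have hnum : Tendsto (fun β => -((p - c) * ε ^ 2 * V * V' * (β * s β)))
        atTop (𝓝 (-((p - c) * ε ^ 2 * V * V' * (ρ * ε / V)))) :=
      (hbs.const_mul _).neg
    have hdenne : ((V * 0 + ε) ^ 2 * (0 + V * ε)) ≠ 0 := by positivity
    have hmain := hnum.div hden hdenne
    have hval : (-((p - c) * ε ^ 2 * V * V' * (ρ * ε / V))) / ((V * 0 + ε) ^ 2 * (0 + V * ε))
        = -(ρ * (p - c) * V') / V := by
      field_simp
      ring
    rw [hval] at hmain
    refine hmain.congr' ?_
    filter_upwards [hpos] with β hβ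
    have hβne : β ≠ 0 := ne_of_gt hβ
    rw [Pi.div_apply]
    field_simp
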